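/- arXiv:1111.4468 — 2 statements merged into one kernel-verified Lean document; each statement's English description precedes it below -/
import Mathlib

section
/- Let Q be a finite directed graph (quiver). An arrow e from vertex a to vertex b lies in a bi-infinite directed path if and only if there is a directed cycle from which a is reachable by a directed path (a cycle upstream from e) and a directed cycle reachable from b by a directed path (a cycle downstream from e). -/
open Relation

private lemma chain_of_closed {V : Type*} (Q : V → V → Prop) (S : Set V)
    (hS : ∀ x ∈ S, ∃ y ∈ S, Q x y) (x : V) (hx : x ∈ S) :
    ∃ g : ℕ → V, g 0 = x ∧ ∀ n, Q (g n) (g (n + 1)) := by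
  choose nxt hmem hQ using hS
  let g : ℕ → {v // v ∈ S} := fun n =>
    Nat.rec (motive := fun _ => {v // v ∈ S}) ⟨x, hx⟩
      (fun _ p => ⟨nxt p p.2, hmem p p.2⟩) n
  refine ⟨fun n => (g n : V), rfl, fun n => ?_⟩
  exact hQ (g n : V) (g n).2

private lemma closure_fwd {V : Type*} (Q : V → V → Prop) :
    ∀ x ∈ {x | ∃ v w, Q v w ∧ ReflTransGen Q w v ∧ ReflTransGen Q x v},
      ∃ y ∈ {x | ∃ v w, Q v w ∧ ReflTransGen Q w v ∧ ReflTransGen Q x v}, Q x y := by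
  rintro x ⟨v, w, hvw, hwv, hxv⟩
  rcases hxv.cases_head with rfl | ⟨y, hxy, hyv⟩
  · exact ⟨w, ⟨x, w, hvw, hwv, hwv⟩, hvw⟩
  · exact ⟨y, ⟨v, w, hvw, hwv, hyv⟩, hxy⟩

private lemma closure_bwd {V : Type*} (Q : V → V → Prop) :
    ∀ x ∈ {x | ∃ v w, Q v w ∧ ReflTransGen Q w v ∧ ReflTransGen Q v x},
      ∃ y ∈ {x | ∃ v w, Q v w ∧ ReflTransGen Q w v ∧ ReflTransGen Q v x}, Q y x := by
  rintro x ⟨v, w, hvw, hwv, hvx⟩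
  rcases hvx.cases_tail with rfl | ⟨c, hvc, hcx⟩
  · rcases hwv.cases_tail with rfl | ⟨c, hwc, hcv⟩
    · exact ⟨x, ⟨x, x, hvw, hwv, ReflTransGen.refl⟩, hvw⟩
    · exact ⟨c, ⟨x, w, hvw, hwv, (ReflTransGen.single hvw).trans hwc⟩, hcv⟩
  · exact ⟨c, ⟨v, w, hvw, hwv, hvc⟩, hcx⟩

private lemma rtg_along {V : Type*} {Q : V → V → Prop} {f : ℤ → V}
    (hf : ∀ k : ℤ, Q (f k) (f (k + 1))) {k l : ℤ} (h : k ≤ l) :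
    Relation.ReflTransGen Q (f k) (f l) := by
  obtain ⟨n, rfl⟩ : ∃ n : ℕ, l = k + n := ⟨(l - k).toNat, by omega⟩
  clear h
  induction n with
  | zero => simpa using Relation.ReflTransGen.refl
  | succ n ih =>
      have h2 : (k + ((n : ℤ) + 1) : ℤ) = (k + n) + 1 := by ring
      push_cast
      rw [h2]
      exact ih.tail (hf _)

private lemma upstream {V : Type*} [Finite V] {Q : V → V → Prop} {f : ℤ → V}
    (hf : ∀ k : ℤ, Q (f k) (f (k + 1))) {a : V} (ha : f 1 = a) :
    ∃ v w, Q v w ∧ ReflTransGen Q w v ∧ ReflTransGen Q v a := by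
  have key : ∀ p q : ℕ, p < q → f (1 - (p : ℤ)) = f (1 - (q : ℤ)) →
      ∃ v w, Q v w ∧ ReflTransGen Q w v ∧ ReflTransGen Q v a := by
    intro p q hpq heq
    refine ⟨f (1 - (q : ℤ)), f (1 - (q : ℤ) + 1), hf _, ?_, ?_⟩
    · rw [← heq] at *
      exact heq ▸ rtg_along hf (by omega : (1 - (q : ℤ) + 1) ≤ 1 - p)
    · exact ha ▸ rtg_along hf (by omega)
  obtain ⟨m, n, hmn, heq⟩ := Finite.exists_ne_map_eq_of_infinite (fun n : ℕ => f (1 - n))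
  rcases hmn.lt_or_gt with h | h
  · exact key m n h heq
  · exact key n m h heq.symm

private lemma downstream {V : Type*} [Finite V] {Q : V → V → Prop} {f : ℤ → V}
    (hf : ∀ k : ℤ, Q (f k) (f (k + 1))) {b : V} (hb : f 2 = b) :
    ∃ v w, Q v w ∧ ReflTransGen Q w v ∧ ReflTransGen Q b v := by
  have key : ∀ p q : ℕ, p < q → f (2 + (p : ℤ)) = f (2 + (q : ℤ)) →
      ∃ v w, Q v w ∧ ReflTransGen Q w v ∧ ReflTransGen Q b v := by
    intro p q hpq heq
    refine ⟨f (2 + (p : ℤ)), f (2 + (p : ℤ) + 1), hf _, ?_, ?_⟩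
    · exact heq ▸ rtg_along hf (by omega : (2 + (p : ℤ) + 1) ≤ 2 + q)
    · exact hb ▸ rtg_along hf (by omega)
  obtain ⟨m, n, hmn, heq⟩ := Finite.exists_ne_map_eq_of_infinite (fun n : ℕ => f (2 + n))
  rcases hmn.lt_or_gt with h | h
  · exact key m n h heq
  · exact key n m h heq.symm

/-- In a finite quiver (encoded by its adjacency relation
`Q a b` = "there is at least one arrow from `a` to `b`"), an arrow `e : a → b`
lies in a bi-infinite directed path if and only if there is a directed cycle
upstream from `e` (a cycle from one of whose vertices `a` is reachable) and a
directed cycle downstream from `e` (a cycle one of whose vertices is reachable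
from `b`). -/
theorem arrow_mem_biInfinite_path_iff {V : Type*} [Fintype V]
    (Q : V → V → Prop) (a b : V) (hab : Q a b) :
    (∃ f : ℤ → V, f 1 = a ∧ f 2 = b ∧ ∀ k : ℤ, Q (f k) (f (k + 1))) ↔
      ((∃ v w : V, Q v w ∧ Relation.ReflTransGen Q w v ∧ Relation.ReflTransGen Q v a) ∧
       (∃ v w : V, Q v w ∧ Relation.ReflTransGen Q w v ∧ Relation.ReflTransGen Q b v)) := by
  constructor
  · rintro ⟨f, hf1, hf2, hf⟩
    exact ⟨upstream hf hf1, downstream hf hf2⟩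
  · rintro ⟨⟨v₁, w₁, h1, h2, h3⟩, ⟨v₂, w₂, h4, h5, h6⟩⟩
    obtain ⟨gb, hgb0, hgb⟩ := chain_of_closed (fun x y => Q y x)
      {x | ∃ v w, Q v w ∧ ReflTransGen Q w v ∧ ReflTransGen Q v x}
      (closure_bwd Q) a ⟨v₁, w₁, h1, h2, h3⟩
    obtain ⟨gf, hgf0, hgf⟩ := chain_of_closed Q
      {x | ∃ v w, Q v w ∧ ReflTransGen Q w v ∧ ReflTransGen Q x v}
      (closure_fwd Q) b ⟨v₂, w₂, h4, h5, h6⟩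
    refine ⟨fun k => if 2 ≤ k then gf (k - 2).toNat else gb (1 - k).toNat, ?_, ?_, ?_⟩
    · simp [hgb0]
    · simp [hgf0]
    · intro k
      by_cases hk2 : 2 ≤ k
      · have h1' : (2 : ℤ) ≤ k + 1 := by omega
        have h2' : (k + 1 - 2).toNat = (k - 2).toNat + 1 := by omega
        simp only [if_pos hk2, if_pos h1', h2']
        exact hgf _
      · by_cases hk1 : k = 1
        · subst hk1
          simp only [if_pos (by norm_num : (2:ℤ) ≤ 1 + 1)]
          norm_num [hgb0, hgf0]
          exact hab
        · have hk0 : k ≤ 0 := by omega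
          have h1' : ¬ (2 : ℤ) ≤ k + 1 := by omega
          have h2' : (1 - k).toNat = (1 - (k + 1)).toNat + 1 := by omega
          simp only [if_neg hk2, if_neg h1', h2']
          exact hgb _
end

section
/- Let J be the Jacobian matrix, evaluated in a field κ, of the presentation of a ring by relations r_i = a_i·a_i' − π_i⁺ − π_i⁻ (i = 1,...,m) in variables a₁,...,aₙ,a₁',...,aₘ', where π_i^± are monomials in aₘ₊₁,...,aₙ only, and suppose all the variables a₁,...,aₘ,a₁',...,aₘ' evaluate to 0 in κ while aₘ₊₁,...,aₙ and the π_i^± evaluate to nonzero elements, with π_i⁻ = −π_i⁺ in κ. Then the rank of the evaluated Jacobian matrix equals the rank of the m×(n−m) integer matrix E with E_{ij} equal to the exponent of a_j in π_i⁺ minus the exponent of a_j in π_i⁻ (for m+1 ≤ j ≤ n). -/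
open MvPolynomial Module Submodule Matrix

section Aux
variable {F K : Type*} [Field F] [Field K] (f : F →+* K)

lemma linearIndependent_comp_ringHom {m ι : Type*} [Fintype m] [Fintype ι]
    {v : ι → m → F} (hv : LinearIndependent F v) :
    LinearIndependent K fun i => f ∘ v i := by
  classical
  let M : Matrix m ι F := Matrix.of fun r i => v i r
  have hmv : ∀ g : ι → F, M.mulVec g = ∑ i, g i • v i := by
    intro g
    funext r
    simp [M, Matrix.mulVec, dotProduct, mul_comm, Finset.sum_apply]
  have hker : LinearMap.ker M.mulVecLin = ⊥ := by
    rw [LinearMap.ker_eq_bot']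
    intro g hg
    rw [Fintype.linearIndependent_iff] at hv
    funext i
    refine hv g ?_ i
    rw [← hmv]
    simpa [Matrix.mulVecLin_apply] using hg
  obtain ⟨g, hg⟩ := M.mulVecLin.exists_leftInverse_of_injective hker
  have hLM : LinearMap.toMatrix' g * M = 1 := by
    have h1 : M.mulVecLin = Matrix.toLin' M := (Matrix.toLin'_apply' M).symm
    calc LinearMap.toMatrix' g * M
        = LinearMap.toMatrix' g * LinearMap.toMatrix' (Matrix.toLin' M) := by
          rw [LinearMap.toMatrix'_toLin']
      _ = LinearMap.toMatrix' (g ∘ₗ Matrix.toLin' M) := (LinearMap.toMatrix'_comp _ _).symm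
      _ = 1 := by rw [← h1, hg, LinearMap.toMatrix'_id]
  rw [Fintype.linearIndependent_iff]
  intro c hc i
  have h1 : (M.map f).mulVec c = 0 := by
    funext r
    have := congrFun hc r
    simpa [Matrix.mulVec, dotProduct, M, Finset.sum_apply, mul_comm] using this
  have h2 : ((LinearMap.toMatrix' g).map f) * (M.map f) = 1 := by
    rw [← Matrix.map_mul, hLM, Matrix.map_one f f.map_zero f.map_one]
  have : c = ((LinearMap.toMatrix' g).map f).mulVec ((M.map f).mulVec c) := by
    rw [Matrix.mulVec_mulVec, h2, Matrix.one_mulVec]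
  rw [this, h1, Matrix.mulVec_zero]
  rfl

lemma Matrix.rank_map_ringHom {m n : Type*} [Fintype m] [Fintype n]
    (A : Matrix m n F) : (A.map f).rank = A.rank := by
  classical
  have hmv : ∀ x : n → F, (A.map f).mulVec (f ∘ x) = f ∘ (A.mulVec x) := by
    intro x
    funext r
    simp [Matrix.mulVec, dotProduct, map_sum]
  have hle : (A.map f).rank ≤ A.rank := by
    have hnull : finrank F (LinearMap.ker A.mulVecLin)
        ≤ finrank K (LinearMap.ker (A.map f).mulVecLin) := by
      set p := LinearMap.ker A.mulVecLin
      let b := Module.finBasis F p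
      have hw : LinearIndependent F fun i => (b i : n → F) :=
        b.linearIndependent.map' p.subtype p.ker_subtype
      have hind : LinearIndependent K fun i => f ∘ (b i : n → F) :=
        linearIndependent_comp_ringHom f hw
      have hmem : ∀ i, f ∘ (b i : n → F) ∈ LinearMap.ker (A.map f).mulVecLin := by
        intro i
        have : A.mulVec (b i : n → F) = 0 := (b i).2
        simp [LinearMap.mem_ker, Matrix.mulVecLin_apply, hmv, this]
      let w : Fin (finrank F p) → LinearMap.ker (A.map f).mulVecLin :=
        fun i => ⟨f ∘ (b i : n → F), hmem i⟩
      have hw' : LinearIndependent K w := by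
        apply LinearIndependent.of_comp (LinearMap.ker (A.map f).mulVecLin).subtype
        exact hind
      simpa using hw'.fintype_card_le_finrank

    have e1 := LinearMap.finrank_range_add_finrank_ker A.mulVecLin
    have e2 := LinearMap.finrank_range_add_finrank_ker (A.map f).mulVecLin
    rw [Module.finrank_fintype_fun_eq_card] at e1 e2
    unfold Matrix.rank
    omega
  have hge : A.rank ≤ (A.map f).rank := by
    obtain ⟨t, hts, hspan, hind⟩ := exists_linearIndependent F (Set.range Aᵀ)
    have htfin : t.Finite := (Set.finite_range Aᵀ).subset hts
    haveI : Fintype t := htfin.fintype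
    have h1 : A.rank = t.toFinset.card := by
      rw [Matrix.rank_eq_finrank_span_cols, show Set.range A.col = Set.range Aᵀ from rfl, ← hspan, finrank_span_set_eq_card hind]
    have hindK : LinearIndependent K fun x : t => f ∘ (x : m → F) :=
      linearIndependent_comp_ringHom f hind
    have hmem : ∀ x : t, f ∘ (x : m → F) ∈ LinearMap.range (A.map f).mulVecLin := by
      rintro ⟨x, hx⟩
      obtain ⟨j, rfl⟩ := hts hx
      rw [Matrix.range_mulVecLin]
      exact subset_span ⟨j, rfl⟩
    let w : t → LinearMap.range (A.map f).mulVecLin := fun x => ⟨f ∘ (x : m → F), hmem x⟩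
    have hw' : LinearIndependent K w :=
      LinearIndependent.of_comp (LinearMap.range (A.map f).mulVecLin).subtype hindK
    have := hw'.fintype_card_le_finrank
    rw [h1]
    unfold Matrix.rank
    simpa [Set.toFinset_card] using this
  exact le_antisymm hle hge

end Aux

section Poly
variable {m n : ℕ}

noncomputable def uexp (m : ℕ) (e : Fin n → ℕ) : (Fin n ⊕ Fin m) →₀ ℕ :=
  ∑ j, Finsupp.single (Sum.inl j) (e j)

lemma uexp_inl (e : Fin n → ℕ) (j : Fin n) : uexp m e (Sum.inl j) = e j := by
  simp [uexp, Finsupp.finset_sum_apply, Finsupp.single_apply, Sum.inl.injEq]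

lemma uexp_inr (e : Fin n → ℕ) (i : Fin m) : uexp m e (Sum.inr i) = 0 := by
  simp [uexp, Finsupp.finset_sum_apply, Finsupp.single_apply]

lemma prod_eq_monomial (e : Fin n → ℕ) :
    (∏ j, (X (Sum.inl j) : MvPolynomial (Fin n ⊕ Fin m) ℤ) ^ e j)
      = monomial (uexp m e) 1 := by
  rw [uexp, monomial_sum_one]
  simp [X_pow_eq_monomial]

lemma pderiv_prod_inr (e : Fin n → ℕ) (i : Fin m) :
    pderiv (Sum.inr i) (∏ j, (X (Sum.inl j) : MvPolynomial (Fin n ⊕ Fin m) ℤ) ^ e j) = 0 := by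
  rw [prod_eq_monomial, pderiv_monomial]
  simp [uexp_inr]

lemma pderiv_prod_inl_zero (e : Fin n → ℕ) (j : Fin n) (h : e j = 0) :
    pderiv (Sum.inl j) (∏ j', (X (Sum.inl j') : MvPolynomial (Fin n ⊕ Fin m) ℤ) ^ e j') = 0 := by
  rw [prod_eq_monomial, pderiv_monomial]
  simp [uexp_inl, h]

lemma phi_pderiv_prod {κ : Type*} [Field κ] (φ : MvPolynomial (Fin n ⊕ Fin m) ℤ →+* κ)
    (e : Fin n → ℕ) (j : Fin n) :
    φ (pderiv (Sum.inl j) (∏ j', X (Sum.inl j') ^ e j'))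
        * φ (X (Sum.inl j) : MvPolynomial (Fin n ⊕ Fin m) ℤ)
      = (e j : κ) * φ (∏ j', X (Sum.inl j') ^ e j') := by
  rcases Nat.eq_zero_or_pos (e j) with h | h
  · rw [pderiv_prod_inl_zero e j h, h]
    simp
  · rw [prod_eq_monomial, pderiv_monomial]
    have hle : Finsupp.single (Sum.inl j : Fin n ⊕ Fin m) 1 ≤ uexp m e := by
      rw [Finsupp.single_le_iff, uexp_inl]
      exact h
    have key : (monomial (uexp m e - Finsupp.single (Sum.inl j) 1) (1 : ℤ))
        * X (Sum.inl j) = monomial (uexp m e) 1 := by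
      rw [X, monomial_mul, mul_one, tsub_add_cancel_of_le hle]
    have h3 : (monomial (uexp m e - Finsupp.single (Sum.inl j) 1)
        ((1:ℤ) * uexp m e (Sum.inl j)))
        = (C (uexp m e (Sum.inl j) : ℤ)) *
          monomial (uexp m e - Finsupp.single (Sum.inl j) 1) 1 := by
      rw [one_mul, C_mul_monomial, mul_one]
    rw [h3, _root_.map_mul, mul_assoc, ← _root_.map_mul, key]
    have hC : φ (C (uexp m e (Sum.inl j) : ℤ)) = (e j : κ) := by
      rw [uexp_inl]
      have h2 := map_intCast (φ.comp (C (σ := Fin n ⊕ Fin m) (R := ℤ))) ((e j : ℤ))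
      simp only [RingHom.coe_comp, Function.comp_apply, Int.cast_natCast] at h2
      exact h2
    rw [hC]

end Poly

/-- Consider the relations
`rᵢ = aᵢ·aᵢ' − πᵢ⁺ − πᵢ⁻` (for `i = 1,…,m`) in the polynomial ring on the variables
`a₁,…,aₙ, a₁',…,aₘ'` (encoded as `Fin n ⊕ Fin m`), where `πᵢ⁺, πᵢ⁻` are monomials in
the frozen variables `a_{m+1},…,aₙ` only, with exponent vectors `pp i`, `pm i`.
Let `φ` be an evaluation in a field `κ` (of characteristic zero, as `κ` is a residue
field of a `ℚ`-algebra) sending `a₁,…,aₘ` and `a₁',…,aₘ'` to `0`, each frozen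
variable and each `πᵢ⁺` to a nonzero element, with `φ(πᵢ⁻) = −φ(πᵢ⁺)`.  Then the
rank of the evaluated Jacobian matrix of the `rᵢ` equals the rank of the
`m × (n−m)` integer matrix `E` with `E i j = pp i j − pm i j` for frozen `j`. -/
theorem jacobian_rank_eq_exchange_rank (κ : Type*) [Field κ] [CharZero κ]
    (m n : ℕ) (hmn : m ≤ n)
    (pp pm : Fin m → Fin n → ℕ)
    (hpp : ∀ i (j : Fin n), (j : ℕ) < m → pp i j = 0)
    (hpm : ∀ i (j : Fin n), (j : ℕ) < m → pm i j = 0)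
    (φ : MvPolynomial (Fin n ⊕ Fin m) ℤ →+* κ)
    (hφa : ∀ i : Fin m, φ (X (Sum.inl (Fin.castLE hmn i))) = 0)
    (hφa' : ∀ i : Fin m, φ (X (Sum.inr i)) = 0)
    (hφfrozen : ∀ j : Fin n, m ≤ (j : ℕ) → φ (X (Sum.inl j)) ≠ 0)
    (hφπ : ∀ i : Fin m, φ (∏ j : Fin n, X (Sum.inl j) ^ pp i j) ≠ 0)
    (hφπ' : ∀ i : Fin m,
      φ (∏ j : Fin n, X (Sum.inl j) ^ pm i j)
        = - φ (∏ j : Fin n, X (Sum.inl j) ^ pp i j)) :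
    Matrix.rank (Matrix.of fun (i : Fin m) (v : Fin n ⊕ Fin m) =>
        φ (pderiv v
          (X (Sum.inl (Fin.castLE hmn i)) * X (Sum.inr i)
            - (∏ j : Fin n, X (Sum.inl j) ^ pp i j)
            - ∏ j : Fin n, X (Sum.inl j) ^ pm i j)))
      = Matrix.rank (Matrix.of fun (i : Fin m) (j : {j : Fin n // m ≤ (j : ℕ)}) =>
          ((pp i j : ℚ) - (pm i j : ℚ))) := by
  classical
  set x : Fin n → κ := fun j => φ (X (Sum.inl j)) with hxdef
  set P : Fin m → κ := fun i => φ (∏ j, X (Sum.inl j) ^ pp i j) with hPdef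
  have hbil : ∀ (i : Fin m) (v : Fin n ⊕ Fin m),
      φ (pderiv v (X (Sum.inl (Fin.castLE hmn i)) * X (Sum.inr i))) = 0 := by
    intro i v
    rw [pderiv_mul, map_add, _root_.map_mul, _root_.map_mul, hφa i, hφa' i]
    ring
  set Jf := {j : Fin n // m ≤ (j : ℕ)} with hJf
  set Eκ : Matrix (Fin m) Jf κ :=
    Matrix.of (fun i (j : Jf) => ((pp i j.1 : κ) - (pm i j.1 : κ))) with hEκ
  set S : Matrix Jf (Fin n ⊕ Fin m) κ :=
    Matrix.of (fun (j : Jf) v => if v = Sum.inl j.1 then (x j.1)⁻¹ else 0) with hS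
  have hJ : (Matrix.of fun (i : Fin m) (v : Fin n ⊕ Fin m) =>
        φ (pderiv v
          (X (Sum.inl (Fin.castLE hmn i)) * X (Sum.inr i)
            - (∏ j : Fin n, X (Sum.inl j) ^ pp i j)
            - ∏ j : Fin n, X (Sum.inl j) ^ pm i j)))
      = Matrix.diagonal (fun i => -P i) * (Eκ * S) := by
    ext i v
    rw [Matrix.diagonal_mul, Matrix.mul_apply]
    have lhs_eq : (Matrix.of fun (i : Fin m) (v : Fin n ⊕ Fin m) =>
        φ (pderiv v
          (X (Sum.inl (Fin.castLE hmn i)) * X (Sum.inr i)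
            - (∏ j : Fin n, X (Sum.inl j) ^ pp i j)
            - ∏ j : Fin n, X (Sum.inl j) ^ pm i j))) i v
        = - φ (pderiv v (∏ j : Fin n, X (Sum.inl j) ^ pp i j))
          - φ (pderiv v (∏ j : Fin n, X (Sum.inl j) ^ pm i j)) := by
      rw [Matrix.of_apply, _root_.map_sub, _root_.map_sub, _root_.map_sub, _root_.map_sub,
        hbil i v]
      ring
    rw [lhs_eq]
    cases v with
    | inr i' =>
      rw [pderiv_prod_inr, pderiv_prod_inr]
      simp [S]
    | inl j =>
      by_cases hj : m ≤ (j : ℕ)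
      · have hx0 : x j ≠ 0 := hφfrozen j hj
        have hp : φ (pderiv (Sum.inl j) (∏ j' : Fin n, X (Sum.inl j') ^ pp i j'))
            = (pp i j : κ) * P i * (x j)⁻¹ := by
          rw [eq_mul_inv_iff_mul_eq₀ hx0]
          exact phi_pderiv_prod φ (pp i) j
        have hq : φ (pderiv (Sum.inl j) (∏ j' : Fin n, X (Sum.inl j') ^ pm i j'))
            = (pm i j : κ) * (-P i) * (x j)⁻¹ := by
          rw [eq_mul_inv_iff_mul_eq₀ hx0]
          rw [phi_pderiv_prod φ (pm i) j, hφπ' i]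
        rw [hp, hq]
        have hsum : ∑ j' : Jf, Eκ i j' * S j' (Sum.inl j)
            = Eκ i ⟨j, hj⟩ * (x j)⁻¹ := by
          rw [Finset.sum_eq_single (⟨j, hj⟩ : Jf)]
          · simp [S]
          · rintro ⟨j', hj'⟩ - hne
            have hne' : (Sum.inl j : Fin n ⊕ Fin m) ≠ Sum.inl j' := by
              intro h
              exact hne (Subtype.ext (Sum.inl.inj h).symm)
            simp [S, hne']
          · intro h
            exact absurd (Finset.mem_univ _) h
        rw [hsum]
        simp only [Eκ, Matrix.of_apply]
        ring
      · have hppz : pp i j = 0 := hpp i j (lt_of_not_ge hj)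
        have hpmz : pm i j = 0 := hpm i j (lt_of_not_ge hj)
        rw [pderiv_prod_inl_zero _ _ hppz, pderiv_prod_inl_zero _ _ hpmz]
        have hsum : ∑ j' : Jf, Eκ i j' * S j' (Sum.inl j) = 0 := by
          refine Finset.sum_eq_zero ?_
          rintro ⟨j', hj'⟩ -
          have hne' : ¬ ((Sum.inl j : Fin n ⊕ Fin m) = Sum.inl j') := by
            intro h
            exact hj (by rw [Sum.inl.inj h]; exact hj')
          simp [S, hne']
        rw [hsum]
        simp
  rw [hJ]
  have hdet1 : IsUnit (Matrix.diagonal (fun i => -P i)).det := by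
    rw [Matrix.det_diagonal]
    refine isUnit_iff_ne_zero.mpr (Finset.prod_ne_zero_iff.mpr ?_)
    intro i _
    exact neg_ne_zero.mpr (hφπ i)
  rw [Matrix.rank_mul_eq_right_of_isUnit_det _ _ hdet1]
  have hrankES : (Eκ * S).rank = Eκ.rank := by
    refine le_antisymm (Matrix.rank_mul_le_left _ _) ?_
    set T : Matrix (Fin n ⊕ Fin m) Jf κ :=
      Matrix.of (fun v (j : Jf) => if v = Sum.inl j.1 then 1 else 0) with hT
    have hST : S * T = Matrix.diagonal (fun j : Jf => (x j.1)⁻¹) := by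
      ext j j''
      rw [Matrix.mul_apply, Finset.sum_eq_single (Sum.inl j.1 : Fin n ⊕ Fin m)]
      · by_cases h : j = j''
        · subst h
          simp [S, T, Matrix.diagonal]
        · have hne' : ¬ ((Sum.inl j.1 : Fin n ⊕ Fin m) = Sum.inl j''.1) := by
            intro hh
            exact h (Subtype.ext (Sum.inl.inj hh))
          simp [S, T, hne', Matrix.diagonal_apply_ne _ h]
      · intro v _ hne
        have : ¬ (v = Sum.inl j.1) := hne
        simp [S, this]
      · intro h
        exact absurd (Finset.mem_univ _) h
    have hdet2 : IsUnit (Matrix.diagonal (fun j : Jf => (x j.1)⁻¹)).det := by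
      rw [Matrix.det_diagonal]
      refine isUnit_iff_ne_zero.mpr (Finset.prod_ne_zero_iff.mpr ?_)
      intro j _
      exact inv_ne_zero (hφfrozen j.1 j.2)
    calc Eκ.rank = (Eκ * (S * T)).rank := by
          rw [hST, Matrix.rank_mul_eq_left_of_isUnit_det _ _ hdet2]
      _ = ((Eκ * S) * T).rank := by rw [Matrix.mul_assoc]
      _ ≤ (Eκ * S).rank := Matrix.rank_mul_le_left _ _
  rw [hrankES]
  have hEmap : Eκ = (Matrix.of fun (i : Fin m) (j : Jf) =>
      ((pp i j : ℚ) - (pm i j : ℚ))).map (Rat.castHom κ) := by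
    ext i j
    simp [Eκ, Matrix.map_apply]
  rw [hEmap, Matrix.rank_map_ringHom]
end
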